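/- Let K be a nontrivial topological group, I an infinite set, and X ⊆ K^I a subset such that for every countable J ⊆ I, the projection of the subgroup generated by X onto K^J is all of K^J. Then the subgroup generated by X is Gδ-dense in K^I, i.e., it meets every nonempty Gδ subset of K^I. -/

import Mathlib

open Set

theorem gdelta_dense_of_countable_projections_surjective {K : Type*} {I : Type*}
    [Group K] [TopologicalSpace K] [IsTopologicalGroup K] [CompactSpace K]
    [TopologicalSpace.MetrizableSpace K] [Nontrivial K] [Infinite I]
    (X : Set (I → K))
    (hproj : ∀ J : Set I, J.Countable → ∀ y : J → K,
      ∃ g ∈ Subgroup.closure X, ∀ j : J, g (j : I) = y j) :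
    ∀ S : ℕ → Set (I → K), (∀ n, IsOpen (S n)) → (⋂ n, S n).Nonempty →
      ((⋂ n, S n) ∩ (Subgroup.closure X : Set (I → K))).Nonempty := by
  intro S hS ⟨x, hx⟩
  simp only [mem_iInter] at hx
  -- for each n, find a basic open neighborhood of x inside S n
  have hbasic : ∀ n, ∃ (F : Finset I) (u : I → Set K),
      (∀ i ∈ F, IsOpen (u i) ∧ x i ∈ u i) ∧ (F : Set I).pi u ⊆ S n := by
    intro n
    exact (isOpen_pi_iff.mp (hS n)) x (hx n)
  choose F u hu hsub using hbasic
  set J : Set I := ⋃ n, (F n : Set I) with hJ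
  have hJc : J.Countable := countable_iUnion fun n => (F n).countable_toSet
  obtain ⟨g, hgX, hg⟩ := hproj J hJc (fun j => x (j : I))
  refine ⟨g, ?_, hgX⟩
  rw [mem_iInter]
  intro n
  apply hsub n
  intro i hi
  have hiJ : i ∈ J := mem_iUnion.mpr ⟨n, hi⟩
  have : g i = x i := hg ⟨i, hiJ⟩
  rw [this]
  exact (hu n i hi).2
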